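/- arXiv:1407.8076 — 2 statements merged into one kernel-verified Lean document; each statement's English description precedes it below -/
import Mathlib

section
/- For the same direct transformation, the polar component of angular momentum is recovered: x·Y − y·X = Θ·c. -/
theorem stmt10 (r R Θ ψ ξ χ c t τ q x y X Y : ℝ) (hr : 0 < r)
    (h1 : ξ ^ 2 + χ ^ 2 + c ^ 2 = 1) (hc : c ≠ -1)
    (ht : t = 1 - ξ ^ 2 / (1 + c)) (hτ : τ = 1 - χ ^ 2 / (1 + c))
    (hq : q = ξ * χ / (1 + c))
    (hx : x = r * (t * Real.cos ψ + q * Real.sin ψ))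
    (hy : y = r * (t * Real.sin ψ - q * Real.cos ψ))
    (hX : X = R * (t * Real.cos ψ + q * Real.sin ψ) - Θ / r * (q * Real.cos ψ + τ * Real.sin ψ))
    (hY : Y = R * (t * Real.sin ψ - q * Real.cos ψ) - Θ / r * (q * Real.sin ψ - τ * Real.cos ψ)) :
    x * Y - y * X = Θ * c := by
  have hc' : 1 + c ≠ 0 := fun h => hc (by linarith)
  have hkey : t * τ - q ^ 2 = c := by
    rw [ht, hτ, hq]
    field_simp
    linear_combination -(1 + c) * h1
  have hp : Real.sin ψ ^ 2 + Real.cos ψ ^ 2 = 1 := Real.sin_sq_add_cos_sq ψ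
  have hr' : r ≠ 0 := ne_of_gt hr
  subst hx hy hX hY
  field_simp
  linear_combination Θ * (t * τ - q ^ 2) * hp + Θ * hkey
end

section
/- For the same direct transformation, the total angular momentum is recovered: (yZ − zY)² + (zX − xZ)² + (xY − yX)² = Θ². -/
set_option maxHeartbeats 2000000


theorem stmt11 (r R Θ ψ ξ χ c t τ q x y z X Y Z : ℝ) (hr : 0 < r)
    (h1 : ξ ^ 2 + χ ^ 2 + c ^ 2 = 1) (hc : c ≠ -1)
    (ht : t = 1 - ξ ^ 2 / (1 + c)) (hτ : τ = 1 - χ ^ 2 / (1 + c))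
    (hq : q = ξ * χ / (1 + c))
    (hx : x = r * (t * Real.cos ψ + q * Real.sin ψ))
    (hy : y = r * (t * Real.sin ψ - q * Real.cos ψ))
    (hz : z = r * ξ)
    (hX : X = R * (t * Real.cos ψ + q * Real.sin ψ) - Θ / r * (q * Real.cos ψ + τ * Real.sin ψ))
    (hY : Y = R * (t * Real.sin ψ - q * Real.cos ψ) - Θ / r * (q * Real.sin ψ - τ * Real.cos ψ))
    (hZ : Z = R * ξ + Θ / r * χ) :
    (y * Z - z * Y) ^ 2 + (z * X - x * Z) ^ 2 + (x * Y - y * X) ^ 2 = Θ ^ 2 := by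
  have hr0 : r ≠ 0 := ne_of_gt hr
  have hc0 : (1 : ℝ) + c ≠ 0 := fun h => hc (by linarith)
  have hs := Real.sin_sq_add_cos_sq ψ
  set s := Real.sin ψ
  set co := Real.cos ψ
  -- algebraic facts
  have htq : t ^ 2 + q ^ 2 + ξ ^ 2 = 1 := by
    rw [ht, hq]; field_simp; ring_nf
    nlinarith [sq_nonneg ξ, h1]
  have hqτ : q ^ 2 + τ ^ 2 + χ ^ 2 = 1 := by
    rw [hτ, hq]; field_simp; ring_nf
    nlinarith [sq_nonneg χ, h1]
  have hdot : q * (t + τ) = ξ * χ := by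
    rw [ht, hτ, hq]; field_simp; ring_nf
    first
    | linarith
    | linear_combination (-(ξ * χ)) * h1
  -- unit vectors
  have hu : (t * co + q * s) ^ 2 + (t * s - q * co) ^ 2 + ξ ^ 2 = 1 := by
    linear_combination (t ^ 2 + q ^ 2) * hs + htq
  have hw : (q * co + τ * s) ^ 2 + (q * s - τ * co) ^ 2 + χ ^ 2 = 1 := by
    linear_combination (q ^ 2 + τ ^ 2) * hs + hqτ
  have huw : (t * co + q * s) * (q * co + τ * s) + (t * s - q * co) * (q * s - τ * co) - ξ * χ = 0 := by
    linear_combination (q * t + q * τ) * hs + hdot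
  -- component identities
  have e1 : y * Z - z * Y = Θ * ((t * s - q * co) * χ + ξ * (q * s - τ * co)) := by
    rw [hy, hz, hY, hZ]; field_simp; ring
  have e2 : z * X - x * Z = Θ * (-(ξ * (q * co + τ * s)) - (t * co + q * s) * χ) := by
    rw [hx, hz, hX, hZ]; field_simp; ring
  have e3 : x * Y - y * X = Θ * ((t * s - q * co) * (q * co + τ * s) - (t * co + q * s) * (q * s - τ * co)) := by
    rw [hx, hy, hX, hY]; field_simp; ring
  rw [e1, e2, e3]
  linear_combination (Θ ^ 2 * ((q * co + τ * s) ^ 2 + (q * s - τ * co) ^ 2 + χ ^ 2)) * hu +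
    Θ ^ 2 * hw -
    (Θ ^ 2 * ((t * co + q * s) * (q * co + τ * s) + (t * s - q * co) * (q * s - τ * co) - ξ * χ)) * huw
end
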